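/- Let $G$ be a finite collection of maps $g:\{1,\dots,n\}\to\{1,\dots,N\}$ with uniform probability, satisfying $\Pro(g(i)=j)=1/N$ for all $i,j$. Let $\ell \le n$, fix $(i_0,j_0)$, and let $a \in \R^{n\times N}$ be defined by $a_{ij}=1/(\ell N)$ for $(i,j)\ne(i_0,j_0)$ and $a_{i_0 j_0}=1+1/(\ell N)$. Then $\E \sum_{k=1}^{\ell} \kmax_{1\le i\le n} a_{ig(i)} = \frac{2}{N} = \frac{1}{N}\sum_{j=1}^{\ell N} s(j)$. -/

import Mathlib

/-- `kmax x k` is the `k`-th largest entry (1-indexed) of the vector `x`. -/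
noncomputable def kmax {n : ℕ} (x : Fin n → ℝ) (k : ℕ) : ℝ :=
  ((List.ofFn x).mergeSort (fun a b => decide (b ≤ a))).getD (k - 1) 0

/-- `smat a k` is the `k`-th largest entry (1-indexed) of `(|a i j|)`. -/
noncomputable def smat {n N : ℕ} (a : Fin n → Fin N → ℝ) (k : ℕ) : ℝ :=
  (((Finset.univ : Finset (Fin n × Fin N)).toList.map
      (fun p => |a p.1 p.2|)).mergeSort (fun a b => decide (b ≤ a))).getD (k - 1) 0

private lemma myrel_sorted (l : List ℝ) :
    (l.mergeSort (fun a b => decide (b ≤ a))).Pairwise (fun a b : ℝ => b ≤ a) := by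
  have := List.pairwise_mergeSort (le := fun a b : ℝ => decide (b ≤ a))
    (fun a b c h1 h2 => by simp only [decide_eq_true_eq] at *; linarith)
    (fun a b => by simpa using le_total b a) l
  exact List.Pairwise.imp (fun h => by simpa using h) this

private lemma sorted_target (c d : ℝ) (h : c ≤ d) (m : ℕ) :
    (d :: List.replicate m c).Pairwise (fun a b : ℝ => b ≤ a) := by
  rw [List.pairwise_cons]
  refine ⟨fun b hb => ?_, List.pairwise_replicate.mpr (Or.inr le_rfl)⟩
  rw [List.eq_of_mem_replicate hb]; exact h

private lemma mergeSort_eq_of_perm {l t : List ℝ} (hp : l.Perm t)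
    (ht : t.Pairwise (fun a b : ℝ => b ≤ a)) :
    l.mergeSort (fun a b => decide (b ≤ a)) = t := by
  haveI : IsAntisymm ℝ (fun a b : ℝ => b ≤ a) := ⟨fun a b h1 h2 => le_antisymm h2 h1⟩
  exact List.Perm.eq_of_pairwise (fun a b _ _ h1 h2 => le_antisymm h2 h1) (myrel_sorted l) ht ((List.mergeSort_perm l _).trans hp)

private lemma map_univ_eq {ι : Type*} [Fintype ι] [DecidableEq ι] (x : ι → ℝ) (i₀ : ι)
    (c : ℝ) (hx : ∀ i, i ≠ i₀ → x i = c) :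
    Multiset.map x (Finset.univ : Finset ι).val
      = x i₀ ::ₘ Multiset.replicate (Fintype.card ι - 1) c := by
  have h0 : i₀ ∈ (Finset.univ : Finset ι).val := Finset.mem_univ_val i₀
  rw [← Multiset.cons_erase h0, Multiset.map_cons]
  congr 1
  rw [Multiset.eq_replicate]
  constructor
  · rw [Multiset.card_map, Multiset.card_erase_of_mem h0]
    rfl
  · intro b hb
    obtain ⟨i, hi, rfl⟩ := Multiset.mem_map.mp hb
    have hnd : ((Finset.univ : Finset ι).val).Nodup := Finset.univ.nodup
    exact hx i ((hnd.mem_erase_iff).mp hi).1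

private lemma getD_replicate' (c : ℝ) (m k : ℕ) (h : k < m) :
    (List.replicate m c).getD k 0 = c := by
  rw [List.getD_eq_getElem _ _ (by simpa using h)]
  simp

private lemma sum_getD_cons (d c : ℝ) (m L : ℕ) (hL1 : 1 ≤ L) (hL : L ≤ m + 1) :
    ∑ k ∈ Finset.range L, (d :: List.replicate m c).getD k 0 = d + ((L - 1 : ℕ) : ℝ) * c := by
  obtain ⟨L', rfl⟩ : ∃ L', L = L' + 1 := ⟨L - 1, (Nat.succ_pred_eq_of_pos hL1).symm⟩
  rw [Finset.sum_range_succ']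
  have hall : ∀ k ∈ Finset.range L', (d :: List.replicate m c).getD (k + 1) 0 = c := by
    intro k hk
    rw [List.getD_cons_succ]
    exact getD_replicate' c m k (lt_of_lt_of_le (Finset.mem_range.mp hk) (by omega))
  rw [Finset.sum_congr rfl hall, List.getD_cons_zero, Finset.sum_const, nsmul_eq_mul]
  simp [add_comm]

theorem stmt12 (n N ℓ : ℕ) (hn : 1 ≤ n) (hN : 1 ≤ N) (hℓ1 : 1 ≤ ℓ) (hℓ : ℓ ≤ n)
    (G : Finset (Fin n → Fin N)) (hG : G.Nonempty)
    (h1 : ∀ i : Fin n, ∀ j : Fin N,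
      ((G.filter fun g => g i = j).card : ℝ) / G.card = 1 / N)
    (i₀ : Fin n) (j₀ : Fin N)
    (a : Fin n → Fin N → ℝ)
    (ha : ∀ i j, a i j = if (i, j) = (i₀, j₀) then 1 + 1 / ((ℓ : ℝ) * N)
      else 1 / ((ℓ : ℝ) * N)) :
    (∑ g ∈ G, ∑ k ∈ Finset.range ℓ, kmax (fun i => a i (g i)) (k + 1)) / G.card
      = 2 / N ∧
    (2 : ℝ) / N = (1 / N) * ∑ j ∈ Finset.range (ℓ * N), smat a (j + 1) := by
  set c : ℝ := 1 / ((ℓ : ℝ) * N) with hc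
  have hℓ0 : (ℓ : ℝ) ≠ 0 := Nat.cast_ne_zero.mpr (by omega)
  have hN0 : (N : ℝ) ≠ 0 := Nat.cast_ne_zero.mpr (by omega)
  have hcpos : 0 < c := by
    rw [hc]
    positivity
  have hlc : (ℓ : ℝ) * c = 1 / N := by
    rw [hc]; field_simp
  -- per-g computation
  have key : ∀ g : Fin n → Fin N,
      ∑ k ∈ Finset.range ℓ, kmax (fun i => a i (g i)) (k + 1)
        = (if g i₀ = j₀ then 1 + c else c) + ((ℓ - 1 : ℕ) : ℝ) * c := by
    intro g
    set x : Fin n → ℝ := fun i => a i (g i) with hxdef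
    have hx : ∀ i, i ≠ i₀ → x i = c := by
      intro i hi
      simp only [hxdef, ha]
      rw [if_neg (by simp [Prod.ext_iff]; intro h; exact absurd h hi)]
    have hxi0 : x i₀ = if g i₀ = j₀ then 1 + c else c := by
      simp only [hxdef, ha, Prod.ext_iff]
      by_cases h : g i₀ = j₀ <;> simp [h]
    have hms : (List.ofFn x).mergeSort (fun a b => decide (b ≤ a))
        = x i₀ :: List.replicate (n - 1) c := by
      apply mergeSort_eq_of_perm
      · rw [← Multiset.coe_eq_coe]
        have h1' : (↑(List.ofFn x) : Multiset ℝ)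
            = Multiset.map x (Finset.univ : Finset (Fin n)).val := by
          rw [List.ofFn_eq_map]; rfl
        rw [h1', map_univ_eq x i₀ c hx]
        simp [← Multiset.cons_coe, Multiset.coe_replicate]
      · apply sorted_target
        rw [hxi0]
        by_cases h : g i₀ = j₀ <;> simp [h] <;> linarith
    have hk : ∀ k ∈ Finset.range ℓ, kmax x (k + 1)
        = (x i₀ :: List.replicate (n - 1) c).getD k 0 := by
      intro k _
      rw [kmax, hms]
      simp
    rw [Finset.sum_congr rfl hk, sum_getD_cons _ _ _ _ hℓ1 (by omega), hxi0]
  have hGcard : (G.card : ℝ) ≠ 0 := Nat.cast_ne_zero.mpr (Finset.card_ne_zero.mpr hG)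
  have hℓcast : ((ℓ - 1 : ℕ) : ℝ) = (ℓ : ℝ) - 1 := by
    rw [Nat.cast_sub hℓ1]; simp
  constructor
  · -- first part
    have hsum : ∑ g ∈ G, ∑ k ∈ Finset.range ℓ, kmax (fun i => a i (g i)) (k + 1)
        = ((G.filter fun g => g i₀ = j₀).card : ℝ) + (G.card : ℝ) * ((ℓ : ℝ) * c) := by
      rw [Finset.sum_congr rfl (fun g _ => key g)]
      rw [Finset.sum_add_distrib, Finset.sum_const, nsmul_eq_mul]
      have : ∑ g ∈ G, (if g i₀ = j₀ then (1 : ℝ) + c else c)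
          = ∑ g ∈ G, ((if g i₀ = j₀ then (1:ℝ) else 0) + c) := by
        apply Finset.sum_congr rfl
        intro g _
        by_cases h : g i₀ = j₀ <;> simp [h]
      rw [this, Finset.sum_add_distrib, Finset.sum_const, nsmul_eq_mul,
        Finset.sum_boole]
      rw [hℓcast]
      ring
    rw [hsum, add_div, mul_div_assoc', mul_comm, mul_div_assoc, div_self hGcard, mul_one,
      h1 i₀ j₀]
    field_simp
    ring
  · -- second part
    set f : Fin n × Fin N → ℝ := fun p => |a p.1 p.2| with hfdef
    have hf : ∀ p : Fin n × Fin N, p ≠ (i₀, j₀) → f p = c := by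
      intro p hp
      simp only [hfdef, ha]
      rw [if_neg (by simpa [Prod.ext_iff] using hp)]
      exact abs_of_pos hcpos
    have hf0 : f (i₀, j₀) = 1 + c := by
      have haij : a i₀ j₀ = 1 + c := by rw [ha]; simp
      simp only [hfdef]
      rw [haij]
      exact abs_of_pos (by linarith)
    have hms : (((Finset.univ : Finset (Fin n × Fin N)).toList.map f).mergeSort
        (fun a b => decide (b ≤ a))) = (1 + c) :: List.replicate (n * N - 1) c := by
      apply mergeSort_eq_of_perm
      · rw [← Multiset.coe_eq_coe]
        have h1' : (↑((Finset.univ : Finset (Fin n × Fin N)).toList.map f) : Multiset ℝ)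
            = Multiset.map f (Finset.univ : Finset (Fin n × Fin N)).val := by
          rw [← Multiset.map_coe, Finset.coe_toList]
        rw [h1', map_univ_eq f (i₀, j₀) c hf, hf0]
        simp [← Multiset.cons_coe, Multiset.coe_replicate]
      · exact sorted_target c (1 + c) (by linarith) _
    have hj : ∀ j ∈ Finset.range (ℓ * N), smat a (j + 1)
        = ((1 + c) :: List.replicate (n * N - 1) c).getD j 0 := by
      intro j _
      rw [smat, hms]
      simp
    have hLN1 : 1 ≤ ℓ * N := Nat.one_le_iff_ne_zero.mpr (by positivity)
    rw [Finset.sum_congr rfl hj,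
      sum_getD_cons _ _ _ _ hLN1 (by have := Nat.mul_le_mul_right N hℓ; omega)]
    have hcast : ((ℓ * N - 1 : ℕ) : ℝ) = (ℓ : ℝ) * N - 1 := by
      rw [Nat.cast_sub hLN1]; push_cast; ring
    rw [hcast]
    have hlnc : (ℓ : ℝ) * N * c = 1 := by rw [hc]; field_simp
    have : (1 + c + ((ℓ : ℝ) * N - 1) * c) = 2 := by nlinarith [hlnc]
    rw [this]
    field_simp
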